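/- Under the GT-SAGA setup, if 0 < α ≤ 1/(2L), then for every k ≥ 0, almost surely E[F(x̄^{k+1}) | F^k] ≤ F(x̄^k) − (α/2)‖∇F(x̄^k)‖² − (α/4)‖∇f̄(x^k)‖² + (αL²/n)‖x^k − Jx^k‖² + (α²L³/n)·t^k. -/

import Mathlib

open MeasureTheory ProbabilityTheory Finset Filter
open scoped ENNReal RealInnerProductSpace

noncomputable section

/-- The second largest singular value of a doubly stochastic matrix `w`, realized as the
operator norm of `w - (1/n) 𝟙ₙ 𝟙ₙᵀ` acting on `EuclideanSpace ℝ (Fin n)`. -/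
def secondSV {n : ℕ} (w : Matrix (Fin n) (Fin n) ℝ) : ℝ :=
  ‖LinearMap.toContinuousLinearMap
      (Matrix.toEuclideanLin (w - Matrix.of fun _ _ => (n : ℝ)⁻¹))‖

/-- The average `(1/n) ∑ᵢ vᵢ` of the blocks of a stacked vector `v ∈ ℝ^{np}`. -/
def blockAvg {n p : ℕ} (v : Fin n → EuclideanSpace ℝ (Fin p)) : EuclideanSpace ℝ (Fin p) :=
  (n : ℝ)⁻¹ • ∑ i, v i

/-- `‖v - J v‖²` for a stacked vector `v ∈ ℝ^{np}`, where `J = ((1/n) 𝟙ₙ 𝟙ₙᵀ) ⊗ Iₚ`. -/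
def consSq {n p : ℕ} (v : Fin n → EuclideanSpace ℝ (Fin p)) : ℝ :=
  ∑ i, ‖v i - blockAvg v‖ ^ 2

/-- `(W - J) v`, blockwise, where `W = w ⊗ Iₚ` and `J = ((1/n) 𝟙ₙ 𝟙ₙᵀ) ⊗ Iₚ`. -/
def WJapp {n p : ℕ} (w : Matrix (Fin n) (Fin n) ℝ) (v : Fin n → EuclideanSpace ℝ (Fin p)) :
    Fin n → EuclideanSpace ℝ (Fin p) :=
  fun i => (∑ r, w i r • v r) - blockAvg v

/-- The local batch function `fᵢ := (1/m) ∑ⱼ f_{i,j}`. -/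
def floc {n m p : ℕ} (f : Fin n → Fin m → EuclideanSpace ℝ (Fin p) → ℝ) (i : Fin n) :
    EuclideanSpace ℝ (Fin p) → ℝ :=
  fun u => (m : ℝ)⁻¹ * ∑ j, f i j u

/-- The global function `F := (1/n) ∑ᵢ fᵢ`. -/
def fglob {n m p : ℕ} (f : Fin n → Fin m → EuclideanSpace ℝ (Fin p) → ℝ) :
    EuclideanSpace ℝ (Fin p) → ℝ :=
  fun u => (n : ℝ)⁻¹ * ∑ i, floc f i u

/-- `F* := inf_x F(x)`. -/
def Fstar {n m p : ℕ} (f : Fin n → Fin m → EuclideanSpace ℝ (Fin p) → ℝ) : ℝ :=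
  ⨅ u, fglob f u

/-- `∇f̄(x) := (1/n) ∑ᵢ ∇fᵢ(xᵢ)`. -/
def gradfbar {n m p : ℕ} (f : Fin n → Fin m → EuclideanSpace ℝ (Fin p) → ℝ)
    (v : Fin n → EuclideanSpace ℝ (Fin p)) : EuclideanSpace ℝ (Fin p) :=
  (n : ℝ)⁻¹ • ∑ i, gradient (floc f i) (v i)

/-- The auxiliary quantity `t := (1/n) ∑ᵢ (1/m) ∑ⱼ ‖x̄ - z_{i,j}‖²`. -/
def tAux {n m p : ℕ} (xbar : EuclideanSpace ℝ (Fin p))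
    (z : Fin n → Fin m → EuclideanSpace ℝ (Fin p)) : ℝ :=
  (n : ℝ)⁻¹ * ∑ i, (m : ℝ)⁻¹ * ∑ j, ‖xbar - z i j‖ ^ 2

/-- The filtration `F^k := σ(τᵢᵗ, sᵢᵗ : i ∈ V, t ≤ k-1)`, with `F⁰` trivial. -/
def gtFilt {Ω : Type*} {n m : ℕ} (τ s : Fin n → ℕ → Ω → Fin m) (k : ℕ) :
    MeasurableSpace Ω :=
  ⨆ (i : Fin n) (t : ℕ) (_ : t < k),
    MeasurableSpace.comap (τ i t) ⊤ ⊔ MeasurableSpace.comap (s i t) ⊤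

set_option autoImplicit false
set_option maxHeartbeats 1000000
set_option autoImplicit false
set_option maxHeartbeats 1000000

section AnalysisPrelim

variable {p : ℕ}

lemma grad_inner (f : EuclideanSpace ℝ (Fin p) → ℝ) (x v : EuclideanSpace ℝ (Fin p)) :
    ⟪gradient f x, v⟫ = fderiv ℝ f x v :=
  InnerProductSpace.toDual_symm_apply

lemma gradient_const_mul_sum {ι : Type*} [Fintype ι] (c : ℝ)
    (g : ι → EuclideanSpace ℝ (Fin p) → ℝ)
    (hg : ∀ i, Differentiable ℝ (g i)) (x : EuclideanSpace ℝ (Fin p)) :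
    gradient (fun u => c * ∑ i, g i u) x = c • ∑ i, gradient (g i) x := by
  have hder : HasFDerivAt (fun u => c * ∑ i, g i u)
      (c • ∑ i, fderiv ℝ (g i) x) x := by
    have h1 : HasFDerivAt (fun u => ∑ i, g i u) (∑ i, fderiv ℝ (g i) x) x :=
      HasFDerivAt.fun_sum (fun i _ => (hg i x).hasFDerivAt)
    simpa using h1.const_mul c
  rw [gradient, hder.fderiv]
  simp [_root_.map_smul, map_sum, gradient]

lemma lipschitz_avg {ι : Type*} [Fintype ι] {K : NNReal}
    (g : ι → EuclideanSpace ℝ (Fin p) → EuclideanSpace ℝ (Fin p))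
    (hg : ∀ i, LipschitzWith K (g i)) {c : ℝ} (hc : 0 ≤ c)
    (h1 : c * (Fintype.card ι : ℝ) ≤ 1) : LipschitzWith K (fun x => c • ∑ i, g i x) := by
  apply LipschitzWith.of_dist_le_mul
  intro x y
  rw [dist_eq_norm, ← smul_sub, ← Finset.sum_sub_distrib, norm_smul]
  have h2 : ‖∑ i, (g i x - g i y)‖ ≤ ∑ i, ‖g i x - g i y‖ := norm_sum_le _ _
  have h3 : ∑ i, ‖g i x - g i y‖ ≤ ∑ _i : ι, (K : ℝ) * dist x y := by
    refine Finset.sum_le_sum fun i _ => ?_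
    rw [← dist_eq_norm]; exact (hg i).dist_le_mul x y
  have h4 : (0:ℝ) ≤ (K : ℝ) * dist x y := by positivity
  calc ‖c‖ * ‖∑ i, (g i x - g i y)‖ ≤ c * (Fintype.card ι * ((K:ℝ) * dist x y)) := by
        rw [Real.norm_of_nonneg hc]
        refine mul_le_mul_of_nonneg_left (h2.trans (h3.trans ?_)) hc
        simp [Finset.sum_const, Finset.card_univ, nsmul_eq_mul]
    _ = (c * Fintype.card ι) * ((K:ℝ) * dist x y) := by ring
    _ ≤ 1 * ((K:ℝ) * dist x y) := mul_le_mul_of_nonneg_right h1 h4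
    _ = (K:ℝ) * dist x y := one_mul _

variable {n m : ℕ} (f : Fin n → Fin m → EuclideanSpace ℝ (Fin p) → ℝ)

lemma diff_floc (hdiff : ∀ i j, Differentiable ℝ (f i j)) (i : Fin n) :
    Differentiable ℝ (floc f i) :=
  Differentiable.const_mul (Differentiable.fun_sum fun j _ => hdiff i j) _

lemma diff_fglob (hdiff : ∀ i j, Differentiable ℝ (f i j)) :
    Differentiable ℝ (fglob f) :=
  Differentiable.const_mul (Differentiable.fun_sum fun i _ => diff_floc f hdiff i) _

lemma grad_floc (hdiff : ∀ i j, Differentiable ℝ (f i j)) (i : Fin n)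
    (x : EuclideanSpace ℝ (Fin p)) :
    gradient (floc f i) x = (m:ℝ)⁻¹ • ∑ j, gradient (f i j) x :=
  gradient_const_mul_sum _ _ (fun j => hdiff i j) x

lemma grad_fglob (hdiff : ∀ i j, Differentiable ℝ (f i j)) (x : EuclideanSpace ℝ (Fin p)) :
    gradient (fglob f) x = (n:ℝ)⁻¹ • ∑ i, gradient (floc f i) x :=
  gradient_const_mul_sum _ _ (fun i => diff_floc f hdiff i) x

lemma lip_grad_floc {L : ℝ} (hm : 1 ≤ m)
    (hdiff : ∀ i j, Differentiable ℝ (f i j))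
    (hlip : ∀ i j, LipschitzWith L.toNNReal (gradient (f i j))) (i : Fin n) :
    LipschitzWith L.toNNReal (gradient (floc f i)) := by
  have h : gradient (floc f i) = fun x => (m:ℝ)⁻¹ • ∑ j, gradient (f i j) x :=
    funext (grad_floc f hdiff i)
  rw [h]
  refine lipschitz_avg _ (fun j => hlip i j) (by positivity) ?_
  have hm0 : (0:ℝ) < m := by exact_mod_cast hm
  simp [Fintype.card_fin, inv_mul_cancel₀ hm0.ne']

lemma lip_grad_fglob {L : ℝ} (hn : 1 ≤ n) (hm : 1 ≤ m)
    (hdiff : ∀ i j, Differentiable ℝ (f i j))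
    (hlip : ∀ i j, LipschitzWith L.toNNReal (gradient (f i j))) :
    LipschitzWith L.toNNReal (gradient (fglob f)) := by
  have h : gradient (fglob f) = fun x => (n:ℝ)⁻¹ • ∑ i, gradient (floc f i) x :=
    funext (grad_fglob f hdiff)
  rw [h]
  refine lipschitz_avg _ (fun i => lip_grad_floc f hm hdiff hlip i) (by positivity) ?_
  have hn0 : (0:ℝ) < n := by exact_mod_cast hn
  simp [Fintype.card_fin, inv_mul_cancel₀ hn0.ne']

/-- The descent lemma for an `L`-smooth function. -/
lemma descent_lemma (F : EuclideanSpace ℝ (Fin p) → ℝ) (hd : Differentiable ℝ F)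
    {L : ℝ} (hL : 0 ≤ L) (hlip : LipschitzWith L.toNNReal (gradient F))
    (a b : EuclideanSpace ℝ (Fin p)) :
    F b ≤ F a + ⟪gradient F a, b - a⟫ + L / 2 * ‖b - a‖ ^ 2 := by
  set c : EuclideanSpace ℝ (Fin p) := b - a with hc
  have curve : ∀ θ : ℝ, HasDerivAt (fun θ : ℝ => a + θ • c) c θ := by
    intro θ
    simpa using ((hasDerivAt_id θ).smul_const c).const_add a
  have hφ : ∀ θ : ℝ, HasDerivAt (fun θ : ℝ => F (a + θ • c))
      ⟪gradient F (a + θ • c), c⟫ θ := by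
    intro θ
    have h1 := (hd (a + θ • c)).hasFDerivAt
    have h2 := h1.comp_hasDerivAt θ (curve θ)
    rw [grad_inner]
    exact h2
  have hgc : Continuous fun θ : ℝ => gradient F (a + θ • c) :=
    hlip.continuous.comp (continuous_const.add (continuous_id.smul continuous_const))
  have hcont : Continuous fun θ : ℝ => ⟪gradient F (a + θ • c), c⟫ :=
    hgc.inner continuous_const
  have key : F b - F a = ∫ θ in (0:ℝ)..1, ⟪gradient F (a + θ • c), c⟫ := by
    rw [intervalIntegral.integral_eq_sub_of_hasDerivAt (fun θ _ => hφ θ)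
      (hcont.intervalIntegrable 0 1)]
    simp [hc]
  have hub : ∀ θ ∈ Set.Icc (0:ℝ) 1,
      ⟪gradient F (a + θ • c), c⟫ ≤ ⟪gradient F a, c⟫ + L * ‖c‖ ^ 2 * θ := by
    intro θ hθ
    have h5 : ⟪gradient F (a + θ • c) - gradient F a, c⟫ ≤
        ‖gradient F (a + θ • c) - gradient F a‖ * ‖c‖ := real_inner_le_norm _ _
    have h6 : ‖gradient F (a + θ • c) - gradient F a‖ ≤ L * (θ * ‖c‖) := by
      have := hlip.dist_le_mul (a + θ • c) a
      rw [dist_eq_norm] at this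
      have h7 : dist (a + θ • c) a = θ * ‖c‖ := by
        rw [dist_eq_norm]
        simp [norm_smul, abs_of_nonneg hθ.1]
      rw [h7] at this
      simpa [Real.coe_toNNReal L hL] using this
    have h8 : ⟪gradient F (a + θ • c) - gradient F a, c⟫ ≤ L * (θ * ‖c‖) * ‖c‖ :=
      h5.trans (mul_le_mul_of_nonneg_right h6 (norm_nonneg _))
    rw [inner_sub_left] at h8
    nlinarith [norm_nonneg c]
  have hint : ∫ θ in (0:ℝ)..1, ⟪gradient F (a + θ • c), c⟫ ≤
      ⟪gradient F a, c⟫ + L / 2 * ‖c‖ ^ 2 := by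
    have hi2 : IntervalIntegrable (fun θ : ℝ => ⟪gradient F a, c⟫ + L * ‖c‖ ^ 2 * θ)
        MeasureTheory.volume 0 1 :=
      ((continuous_const).add ((continuous_const).mul continuous_id)).intervalIntegrable 0 1
    have hmono := intervalIntegral.integral_mono_on (a := (0:ℝ)) (b := 1) zero_le_one
      (hcont.intervalIntegrable 0 1) hi2 hub
    calc ∫ θ in (0:ℝ)..1, ⟪gradient F (a + θ • c), c⟫
        ≤ ∫ θ in (0:ℝ)..1, (⟪gradient F a, c⟫ + L * ‖c‖ ^ 2 * θ) := hmono
      _ = ⟪gradient F a, c⟫ + L / 2 * ‖c‖ ^ 2 := by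
          have hmul : IntervalIntegrable (fun θ : ℝ => L * ‖c‖ ^ 2 * θ)
              MeasureTheory.volume 0 1 :=
            ((continuous_const).mul continuous_id).intervalIntegrable 0 1
          rw [intervalIntegral.integral_add intervalIntegrable_const hmul,
            intervalIntegral.integral_const_mul]
          simp
          ring
  have := key.symm ▸ hint
  linarith [this]

lemma norm_sum_sq_le {ι : Type*} [Fintype ι] (a : ι → EuclideanSpace ℝ (Fin p)) :
    ‖∑ i, a i‖ ^ 2 ≤ (Fintype.card ι : ℝ) * ∑ i, ‖a i‖ ^ 2 := by
  have h1 : ‖∑ i, a i‖ ^ 2 ≤ (∑ i, ‖a i‖) ^ 2 := by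
    have := norm_sum_le Finset.univ a
    nlinarith [norm_nonneg (∑ i, a i), Finset.sum_nonneg (fun i (_ : i ∈ Finset.univ) => norm_nonneg (a i))]
  refine h1.trans ?_
  have := sq_sum_le_card_mul_sum_sq (s := (Finset.univ : Finset ι)) (f := fun i => ‖a i‖)
  simpa [Finset.card_univ] using this

end AnalysisPrelim

section PiSum

lemma sum_pi_eval {n m : ℕ} (i0 : Fin n) (φ : Fin m → ℝ) :
    ∑ t : Fin n → Fin m, φ (t i0) = (m:ℝ)^(n-1) * ∑ j, φ j := by
  classical
  have h := Finset.prod_univ_sum (fun _ : Fin n => (Finset.univ : Finset (Fin m)))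
      (fun i j => if i = i0 then φ j else 1)
  rw [Fintype.piFinset_univ] at h
  have hL : ∏ i : Fin n, (∑ j : Fin m, if i = i0 then φ j else 1)
      = (∑ j, φ j) * (m:ℝ)^(n-1) := by
    rw [← Finset.mul_prod_erase Finset.univ _ (Finset.mem_univ i0)]
    have h1 : (∑ j : Fin m, if i0 = i0 then φ j else 1) = ∑ j, φ j := by simp
    have h2 : ∏ i ∈ Finset.univ.erase i0, (∑ j : Fin m, if i = i0 then φ j else 1)
        = (m:ℝ)^(n-1) := by
      have he : ∀ i ∈ Finset.univ.erase i0,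
          (∑ j : Fin m, if i = i0 then φ j else 1) = (m:ℝ) := by
        intro i hi
        rw [Finset.mem_erase] at hi
        simp [hi.1]
      rw [Finset.prod_congr rfl he, Finset.prod_const,
        Finset.card_erase_of_mem (Finset.mem_univ i0)]
      simp
    rw [h1, h2]
  have hR : ∀ t : Fin n → Fin m, (∏ i, if i = i0 then φ (t i) else 1) = φ (t i0) := by
    intro t
    rw [Finset.prod_eq_single i0 (fun b _ hb => if_neg hb)
      (fun h => absurd (Finset.mem_univ i0) h)]
    simp
  calc ∑ t : Fin n → Fin m, φ (t i0)
      = ∑ t : Fin n → Fin m, ∏ i, (if i = i0 then φ (t i) else 1) :=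
        (Finset.sum_congr rfl (fun t _ => (hR t).symm))
    _ = ∏ i : Fin n, (∑ j : Fin m, if i = i0 then φ j else 1) := h.symm
    _ = (m:ℝ)^(n-1) * ∑ j, φ j := by rw [hL, mul_comm]

lemma sum_pi_eval₂ {n m : ℕ} (i1 i2 : Fin n) (h12 : i1 ≠ i2) (φ ψ : Fin m → ℝ) :
    ∑ t : Fin n → Fin m, φ (t i1) * ψ (t i2)
      = (m:ℝ)^(n-2) * ((∑ j, φ j) * (∑ j, ψ j)) := by
  classical
  have h := Finset.prod_univ_sum (fun _ : Fin n => (Finset.univ : Finset (Fin m)))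
      (fun i j => if i = i1 then φ j else if i = i2 then ψ j else 1)
  rw [Fintype.piFinset_univ] at h
  have hmem2 : i2 ∈ Finset.univ.erase i1 :=
    Finset.mem_erase.2 ⟨(Ne.symm h12), Finset.mem_univ i2⟩
  have hL : ∏ i : Fin n, (∑ j : Fin m, if i = i1 then φ j else if i = i2 then ψ j else 1)
      = (∑ j, φ j) * ((∑ j, ψ j) * (m:ℝ)^(n-2)) := by
    rw [← Finset.mul_prod_erase Finset.univ _ (Finset.mem_univ i1),
      ← Finset.mul_prod_erase _ _ hmem2]
    have h1 : (∑ j : Fin m, if i1 = i1 then φ j else if i1 = i2 then ψ j else 1)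
        = ∑ j, φ j := by simp
    have h2 : (∑ j : Fin m, if i2 = i1 then φ j else if i2 = i2 then ψ j else 1)
        = ∑ j, ψ j := by simp [Ne.symm h12]
    have h3 : ∏ i ∈ (Finset.univ.erase i1).erase i2,
        (∑ j : Fin m, if i = i1 then φ j else if i = i2 then ψ j else 1) = (m:ℝ)^(n-2) := by
      have he : ∀ i ∈ (Finset.univ.erase i1).erase i2,
          (∑ j : Fin m, if i = i1 then φ j else if i = i2 then ψ j else 1) = (m:ℝ) := by
        intro i hi
        rw [Finset.mem_erase] at hi
        have hi1 := (Finset.mem_erase.1 hi.2).1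
        simp [hi.1, hi1]
      rw [Finset.prod_congr rfl he, Finset.prod_const,
        Finset.card_erase_of_mem hmem2,
        Finset.card_erase_of_mem (Finset.mem_univ i1)]
      congr 1
      rw [Finset.card_univ, Fintype.card_fin]
      omega
    rw [h1, h2, h3]
  have hR : ∀ t : Fin n → Fin m,
      (∏ i, if i = i1 then φ (t i) else if i = i2 then ψ (t i) else 1)
        = φ (t i1) * ψ (t i2) := by
    intro t
    rw [← Finset.mul_prod_erase Finset.univ _ (Finset.mem_univ i1),
      ← Finset.mul_prod_erase _ _ hmem2]
    have h3 : ∏ i ∈ (Finset.univ.erase i1).erase i2,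
        (if i = i1 then φ (t i) else if i = i2 then ψ (t i) else 1) = 1 := by
      refine Finset.prod_eq_one fun i hi => ?_
      rw [Finset.mem_erase] at hi
      have hi1 := (Finset.mem_erase.1 hi.2).1
      simp [hi.1, hi1]
    rw [h3]
    simp [Ne.symm h12]
  calc ∑ t : Fin n → Fin m, φ (t i1) * ψ (t i2)
      = ∑ t : Fin n → Fin m,
          ∏ i, (if i = i1 then φ (t i) else if i = i2 then ψ (t i) else 1) :=
        (Finset.sum_congr rfl (fun t _ => (hR t).symm))
    _ = ∏ i : Fin n, (∑ j : Fin m, if i = i1 then φ j else if i = i2 then ψ j else 1) := h.symm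
    _ = (m:ℝ)^(n-2) * ((∑ j, φ j) * (∑ j, ψ j)) := by rw [hL]; ring

end PiSum

section DetMain

lemma var_le {p m : ℕ} (X : Fin m → EuclideanSpace ℝ (Fin p)) :
    ∑ j, ‖X j - (m:ℝ)⁻¹ • ∑ j', X j'‖^2 ≤ ∑ j, ‖X j‖^2 := by
  rcases Nat.eq_zero_or_pos m with hm | hm
  · subst hm; simp
  have hm0 : (m:ℝ) ≠ 0 := by positivity
  set c : EuclideanSpace ℝ (Fin p) := (m:ℝ)⁻¹ • ∑ j', X j' with hc
  have hsum : ∑ j', X j' = (m:ℝ) • c := (smul_inv_smul₀ hm0 _).symm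
  have hXc : ⟪∑ j', X j', c⟫ = (m:ℝ) * ‖c‖^2 := by
    rw [hsum, real_inner_smul_left, real_inner_self_eq_norm_sq]
  have hexp : ∑ j, ‖X j - c‖^2
      = (∑ j, ‖X j‖^2) - 2*((m:ℝ)*‖c‖^2) + (m:ℝ)*‖c‖^2 := by
    have h1 : ∀ j : Fin m, ‖X j - c‖^2 = ‖X j‖^2 - 2*⟪X j, c⟫ + ‖c‖^2 := fun j =>
      norm_sub_sq_real _ _
    rw [Finset.sum_congr rfl fun j _ => h1 j, Finset.sum_add_distrib,
      Finset.sum_sub_distrib, Finset.sum_const, ← Finset.mul_sum, ← sum_inner, hXc]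
    simp [Finset.card_univ, nsmul_eq_mul]
  have hpos : 0 ≤ (m:ℝ)*‖c‖^2 := by positivity
  rw [hexp]
  linarith

lemma det_main {p n m : ℕ} (hn : 1 ≤ n) (hm : 1 ≤ m) {L : ℝ} (hL : 0 < L)
    (f : Fin n → Fin m → EuclideanSpace ℝ (Fin p) → ℝ)
    (hdiff : ∀ i j, Differentiable ℝ (f i j))
    (hlip : ∀ i j, LipschitzWith L.toNNReal (gradient (f i j)))
    {α : ℝ} (hα0 : 0 < α) (hα2 : α ≤ 1 / (2*L))
    (u : Fin n → EuclideanSpace ℝ (Fin p)) (v : Fin n → Fin m → EuclideanSpace ℝ (Fin p)) :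
    ((m:ℝ)^n)⁻¹ * ∑ t : Fin n → Fin m, fglob f (blockAvg u - α •
      ((n:ℝ)⁻¹ • ∑ i, (gradient (f i (t i)) (u i) - gradient (f i (t i)) (v i (t i))
        + (m:ℝ)⁻¹ • ∑ j, gradient (f i j) (v i j))))
      ≤ fglob f (blockAvg u)
        - α / 2 * ‖gradient (fglob f) (blockAvg u)‖ ^ 2
        - α / 4 * ‖gradfbar f u‖ ^ 2
        + α * L ^ 2 / (n:ℝ) * consSq u
        + α ^ 2 * L ^ 3 / (n:ℝ) * tAux (blockAvg u) v := by
  classical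
  have hm0 : (0:ℝ) < m := by exact_mod_cast hm
  have hn0 : (0:ℝ) < n := by exact_mod_cast hn
  have hαL : α * L ≤ 1/2 := by
    have h2L : (0:ℝ) < 2*L := by positivity
    rw [le_div_iff₀ h2L] at hα2
    linarith
  set ub : EuclideanSpace ℝ (Fin p) := blockAvg u with hub
  set w : EuclideanSpace ℝ (Fin p) := gradient (fglob f) ub with hw
  set d : EuclideanSpace ℝ (Fin p) := gradfbar f u with hd
  set X : Fin n → Fin m → EuclideanSpace ℝ (Fin p) :=
    fun i j => gradient (f i j) (u i) - gradient (f i j) (v i j) with hX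
  set Y : Fin n → Fin m → EuclideanSpace ℝ (Fin p) :=
    fun i j => X i j - (m:ℝ)⁻¹ • ∑ j', X i j' with hY
  set S : (Fin n → Fin m) → EuclideanSpace ℝ (Fin p) :=
    fun t => (n:ℝ)⁻¹ • ∑ i, Y i (t i) with hS
  set G : (Fin n → Fin m) → EuclideanSpace ℝ (Fin p) :=
    fun t => (n:ℝ)⁻¹ • ∑ i, (gradient (f i (t i)) (u i) - gradient (f i (t i)) (v i (t i))
      + (m:ℝ)⁻¹ • ∑ j, gradient (f i j) (v i j)) with hG
  have hYsum : ∀ i, ∑ j, Y i j = 0 := by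
    intro i
    simp only [hY, Finset.sum_sub_distrib, Finset.sum_const, Finset.card_univ,
      Fintype.card_fin]
    have hns : (m : ℕ) • ((m:ℝ)⁻¹ • ∑ j', X i j') = ((m:ℝ) * (m:ℝ)⁻¹) • ∑ j', X i j' := by
      rw [← Nat.cast_smul_eq_nsmul ℝ, smul_smul]
    rw [hns, mul_inv_cancel₀ hm0.ne', one_smul, sub_self]
  have hGd : ∀ t, G t = d + S t := by
    intro t
    simp only [hG, hS, hd]
    unfold gradfbar
    rw [← smul_add, ← Finset.sum_add_distrib]
    refine congrArg _ (Finset.sum_congr rfl fun i _ => ?_)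
    rw [grad_floc f hdiff i]
    simp only [hY, hX]
    rw [Finset.sum_sub_distrib, smul_sub]
    abel
  have hS0 : ∀ c : EuclideanSpace ℝ (Fin p), ∑ t : Fin n → Fin m, ⟪c, S t⟫ = 0 := by
    intro c
    have h1 : ∀ t : Fin n → Fin m, ⟪c, S t⟫ = (n:ℝ)⁻¹ * ∑ i, ⟪c, Y i (t i)⟫ := by
      intro t
      rw [hS]
      simp only []
      rw [real_inner_smul_right, inner_sum]
    rw [Finset.sum_congr rfl fun t _ => h1 t, ← Finset.mul_sum, Finset.sum_comm]
    have h2 : ∀ i : Fin n, ∑ t : Fin n → Fin m, ⟪c, Y i (t i)⟫ = 0 := by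
      intro i
      rw [sum_pi_eval i (fun j => ⟪c, Y i j⟫), ← inner_sum, hYsum i, inner_zero_right,
        mul_zero]
    rw [Finset.sum_congr rfl fun i _ => h2 i, Finset.sum_const, smul_zero, mul_zero]
  have hcardn : (Fintype.card (Fin n → Fin m) : ℝ) = (m:ℝ)^n := by
    rw [Fintype.card_fun, Fintype.card_fin, Fintype.card_fin]; push_cast; ring
  have hdesc : ∀ t, fglob f (ub - α • G t) ≤
      fglob f ub - α * ⟪w, G t⟫ + L/2 * (α^2 * ‖G t‖^2) := by
    intro t
    have h := descent_lemma (fglob f) (diff_fglob f hdiff) hL.le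
      (lip_grad_fglob f hn hm hdiff hlip) ub (ub - α • G t)
    have e1 : ub - α • G t - ub = -(α • G t) := by abel
    rw [e1, inner_neg_right, real_inner_smul_right, norm_neg, norm_smul] at h
    have e2 : (‖α‖ * ‖G t‖)^2 = α^2 * ‖G t‖^2 := by
      rw [mul_pow, Real.norm_eq_abs, sq_abs]
    rw [e2] at h
    rw [← hw] at h
    linarith
  have hinner : ∑ t : Fin n → Fin m, ⟪w, G t⟫ = (m:ℝ)^n * ⟪w, d⟫ := by
    have h1 : ∀ t, ⟪w, G t⟫ = ⟪w, d⟫ + ⟪w, S t⟫ := fun t => by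
      rw [hGd t, inner_add_right]
    rw [Finset.sum_congr rfl fun t _ => h1 t, Finset.sum_add_distrib, hS0 w,
      Finset.sum_const, add_zero, nsmul_eq_mul, Finset.card_univ, hcardn]
  have hGsq : ∑ t : Fin n → Fin m, ‖G t‖^2
      = (m:ℝ)^n * ‖d‖^2 + ∑ t : Fin n → Fin m, ‖S t‖^2 := by
    have h1 : ∀ t, ‖G t‖^2 = ‖d‖^2 + 2*⟪d, S t⟫ + ‖S t‖^2 := fun t => by
      rw [hGd t]; rw [norm_add_sq_real]
    rw [Finset.sum_congr rfl fun t _ => h1 t, Finset.sum_add_distrib,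
      Finset.sum_add_distrib, ← Finset.mul_sum, hS0 d, mul_zero, add_zero,
      Finset.sum_const, nsmul_eq_mul, Finset.card_univ, hcardn]
  have hSsq : ∑ t : Fin n → Fin m, ‖S t‖^2
      = (n:ℝ)⁻¹^2 * ((m:ℝ)^(n-1) * ∑ i, ∑ j, ‖Y i j‖^2) := by
    have h1 : ∀ t, ‖S t‖^2 = (n:ℝ)⁻¹^2 * ∑ i1, ∑ i2, ⟪Y i1 (t i1), Y i2 (t i2)⟫ := by
      intro t
      rw [hS]
      simp only []
      rw [norm_smul, mul_pow, Real.norm_eq_abs, sq_abs, ← real_inner_self_eq_norm_sq,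
        sum_inner]
      congr 1
      exact Finset.sum_congr rfl fun i1 _ => by rw [inner_sum]
    rw [Finset.sum_congr rfl fun t _ => h1 t, ← Finset.mul_sum]
    congr 1
    have h2 : ∀ i1, ∑ t : Fin n → Fin m, ∑ i2, ⟪Y i1 (t i1), Y i2 (t i2)⟫
        = (m:ℝ)^(n-1) * ∑ j, ‖Y i1 j‖^2 := by
      intro i1
      rw [Finset.sum_comm]
      have hoff : ∀ i2, i2 ≠ i1 → ∑ t : Fin n → Fin m, ⟪Y i1 (t i1), Y i2 (t i2)⟫ = 0 := by
        intro i2 h12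
        have hexp : ∀ t : Fin n → Fin m, ⟪Y i1 (t i1), Y i2 (t i2)⟫
            = ∑ k : Fin p, Y i1 (t i1) k * Y i2 (t i2) k := by
          intro t
          rw [PiLp.inner_apply]
          exact Finset.sum_congr rfl fun k _ => by rw [RCLike.inner_apply, conj_trivial]; ring
        rw [Finset.sum_congr rfl fun t _ => hexp t, Finset.sum_comm]
        refine Finset.sum_eq_zero fun k _ => ?_
        rw [sum_pi_eval₂ i1 i2 (Ne.symm h12) (fun j => Y i1 j k) (fun j => Y i2 j k)]
        have hz : ∑ j, Y i1 j k = 0 := by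
          have h0 := congrArg (fun v => v k) (hYsum i1)
          simp only [WithLp.ofLp_sum, Finset.sum_apply] at h0
          simpa using h0
        rw [hz]
        ring
      rw [Finset.sum_eq_single i1 (fun i2 _ h => hoff i2 h) (by simp),
        sum_pi_eval i1 (fun j => (inner ℝ (Y i1 j) (Y i1 j) : ℝ))]
      congr 1
      exact Finset.sum_congr rfl fun j _ => real_inner_self_eq_norm_sq _
    rw [Finset.sum_comm, Finset.mul_sum]
    exact Finset.sum_congr rfl fun i1 _ => h2 i1
  have hconsSq : consSq u = ∑ i, ‖u i - ub‖^2 := by rw [hub]; rfl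
  have hC0 : 0 ≤ consSq u := by
    rw [hconsSq]; exact Finset.sum_nonneg fun i _ => by positivity
  have hT0 : 0 ≤ tAux ub v := by
    unfold tAux
    have : ∀ i : Fin n, 0 ≤ (m:ℝ)⁻¹ * ∑ j, ‖ub - v i j‖^2 := fun i => by positivity
    positivity
  have hV2le : ∑ i, ∑ j, ‖Y i j‖^2
      ≤ 2*L^2*(m:ℝ)*consSq u + 2*L^2*(m:ℝ)*(n:ℝ)*tAux ub v := by
    have hvar : ∀ i : Fin n, ∑ j, ‖Y i j‖^2 ≤ ∑ j, ‖X i j‖^2 := fun i => var_le (X i)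
    have hXbd : ∀ (i : Fin n) (j : Fin m),
        ‖X i j‖^2 ≤ 2*L^2*(‖u i - ub‖^2 + ‖ub - v i j‖^2) := by
      intro i j
      have h1 : ‖X i j‖ ≤ L * ‖u i - v i j‖ := by
        have h2 := (hlip i j).dist_le_mul (u i) (v i j)
        rw [dist_eq_norm, dist_eq_norm, Real.coe_toNNReal L hL.le] at h2
        exact h2
      have h2 : ‖u i - v i j‖ ≤ ‖u i - ub‖ + ‖ub - v i j‖ := by
        calc ‖u i - v i j‖ = ‖(u i - ub) + (ub - v i j)‖ := by rw [sub_add_sub_cancel]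
          _ ≤ _ := norm_add_le _ _
      have h3 : ‖X i j‖ ≤ L*(‖u i - ub‖ + ‖ub - v i j‖) :=
        h1.trans (mul_le_mul_of_nonneg_left h2 hL.le)
      nlinarith [mul_self_le_mul_self (norm_nonneg (X i j)) h3,
        mul_nonneg (mul_nonneg hL.le hL.le) (sq_nonneg (‖u i - ub‖ - ‖ub - v i j‖)),
        norm_nonneg (u i - ub), norm_nonneg (ub - v i j)]
    calc ∑ i, ∑ j, ‖Y i j‖^2 ≤ ∑ i, ∑ j, ‖X i j‖^2 := Finset.sum_le_sum fun i _ => hvar i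
      _ ≤ ∑ i, ∑ j, 2*L^2*(‖u i - ub‖^2 + ‖ub - v i j‖^2) :=
          Finset.sum_le_sum fun i _ => Finset.sum_le_sum fun j _ => hXbd i j
      _ = 2*L^2*(m:ℝ)*consSq u + 2*L^2*(m:ℝ)*(n:ℝ)*tAux ub v := by
          have e1 : ∀ i : Fin n, ∑ j : Fin m, 2*L^2*(‖u i - ub‖^2 + ‖ub - v i j‖^2)
              = 2*L^2*(m:ℝ)*‖u i - ub‖^2 + 2*L^2*(∑ j, ‖ub - v i j‖^2) := by
            intro i
            rw [Finset.sum_congr rfl (fun j _ => mul_add (2*L^2) _ _), Finset.sum_add_distrib,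
              Finset.sum_const, ← Finset.mul_sum, Finset.card_univ, Fintype.card_fin,
              nsmul_eq_mul]
            ring
          rw [Finset.sum_congr rfl fun i _ => e1 i, Finset.sum_add_distrib, ← Finset.mul_sum,
            ← Finset.mul_sum]
          have e2 : tAux ub v = (n:ℝ)⁻¹ * ∑ i, (m:ℝ)⁻¹ * ∑ j, ‖ub - v i j‖^2 := rfl
          have e3 : ∑ i, ∑ j, ‖ub - v i j‖^2 = (m:ℝ) * ((n:ℝ) * tAux ub v) := by
            rw [e2, ← Finset.mul_sum]
            field_simp
          rw [e3, hconsSq]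
          ring
  have hWW : ‖w - d‖^2 ≤ L^2/(n:ℝ) * consSq u := by
    have e1 : w - d = (n:ℝ)⁻¹ • ∑ i, (gradient (floc f i) ub - gradient (floc f i) (u i)) := by
      rw [hw, hd, grad_fglob f hdiff]
      unfold gradfbar
      rw [← smul_sub, ← Finset.sum_sub_distrib]
    have e4 : ∀ i : Fin n, ‖gradient (floc f i) ub - gradient (floc f i) (u i)‖^2
        ≤ L^2 * ‖u i - ub‖^2 := by
      intro i
      have h5 := (lip_grad_floc f hm hdiff hlip i).dist_le_mul ub (u i)
      rw [dist_eq_norm, dist_eq_norm, Real.coe_toNNReal L hL.le, norm_sub_rev ub (u i)] at h5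
      nlinarith [norm_nonneg (gradient (floc f i) ub - gradient (floc f i) (u i)),
        norm_nonneg (u i - ub), hL.le]
    have e5 : ‖∑ i, (gradient (floc f i) ub - gradient (floc f i) (u i))‖^2
        ≤ (n:ℝ) * ∑ i, L^2 * ‖u i - ub‖^2 := by
      refine (norm_sum_sq_le _).trans ?_
      rw [Fintype.card_fin]
      exact mul_le_mul_of_nonneg_left (Finset.sum_le_sum fun i _ => e4 i) (by positivity)
    calc ‖w - d‖^2
        = (n:ℝ)⁻¹^2 * ‖∑ i, (gradient (floc f i) ub - gradient (floc f i) (u i))‖^2 := by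
          rw [e1, norm_smul, mul_pow, Real.norm_eq_abs, sq_abs]
      _ ≤ (n:ℝ)⁻¹^2 * ((n:ℝ) * ∑ i, L^2 * ‖u i - ub‖^2) :=
          mul_le_mul_of_nonneg_left e5 (by positivity)
      _ = L^2/(n:ℝ) * consSq u := by
          rw [hconsSq, ← Finset.mul_sum]
          field_simp
  have hwd : ⟪w, d⟫ = (‖w‖^2 + ‖d‖^2 - ‖w - d‖^2)/2 := by
    linarith [norm_sub_sq_real w d]
  have hmn0 : ((m:ℝ)^n) ≠ 0 := by positivity
  have hpow : (m:ℝ)^(n-1) = (m:ℝ)^n * (m:ℝ)⁻¹ := by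
    have h9 : (m:ℝ)^n = (m:ℝ)^(n-1) * m := by
      rw [← pow_succ]
      congr 1
      omega
    rw [h9]
    field_simp
  have hstep : ((m:ℝ)^n)⁻¹ * ∑ t : Fin n → Fin m, fglob f (ub - α • G t)
      ≤ fglob f ub - α * ⟪w, d⟫ + L/2*α^2*‖d‖^2
        + L/2*α^2*((n:ℝ)⁻¹^2 * ((m:ℝ)⁻¹ * ∑ i, ∑ j, ‖Y i j‖^2)) := by
    have hsum1 : ∑ t : Fin n → Fin m, fglob f (ub - α • G t)
        ≤ ∑ t : Fin n → Fin m, (fglob f ub - α * ⟪w, G t⟫ + L/2 * (α^2 * ‖G t‖^2)) :=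
      Finset.sum_le_sum fun t _ => hdesc t
    have hsum2 : ∑ t : Fin n → Fin m, (fglob f ub - α * ⟪w, G t⟫ + L/2 * (α^2 * ‖G t‖^2))
        = (m:ℝ)^n * fglob f ub - α * ((m:ℝ)^n * ⟪w, d⟫)
          + L/2*α^2 * ((m:ℝ)^n * ‖d‖^2 + ∑ t : Fin n → Fin m, ‖S t‖^2) := by
      rw [Finset.sum_add_distrib, Finset.sum_sub_distrib, Finset.sum_const,
        ← Finset.mul_sum, hinner]
      have e6 : ∑ t : Fin n → Fin m, L/2 * (α^2 * ‖G t‖^2)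
          = L/2*α^2 * ∑ t : Fin n → Fin m, ‖G t‖^2 := by
        rw [Finset.mul_sum]
        exact Finset.sum_congr rfl fun t _ => by ring
      rw [e6, hGsq, nsmul_eq_mul, Finset.card_univ, hcardn]
    have hmul := mul_le_mul_of_nonneg_left (hsum1.trans_eq hsum2)
      (inv_nonneg.2 (le_of_lt (by positivity : (0:ℝ) < (m:ℝ)^n)))
    refine hmul.trans_eq ?_
    rw [hSsq, hpow]
    field_simp
    ring
  refine hstep.trans ?_
  have hν1 : (n:ℝ)⁻¹ ≤ 1 := by
    rw [inv_le_one_iff₀]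
    right
    exact_mod_cast hn
  have hαLν : α*L*(n:ℝ)⁻¹ ≤ 1/2 := by
    calc α*L*(n:ℝ)⁻¹ ≤ α*L*1 :=
          mul_le_mul_of_nonneg_left hν1 (mul_nonneg hα0.le hL.le)
      _ ≤ 1/2 := by rw [mul_one]; exact hαL
  have hcoef : (0:ℝ) ≤ α/2*(1/2 - α*L) := by
    have : (0:ℝ) ≤ 1/2 - α*L := by linarith
    positivity
  have hb1 : (0:ℝ) ≤ α/2*(1/2 - α*L)*‖d‖^2 :=
    mul_nonneg hcoef (by positivity)
  have hb2 := mul_le_mul_of_nonneg_left hV2le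
    (by positivity : (0:ℝ) ≤ L/2*α^2*((n:ℝ)⁻¹^2 * (m:ℝ)⁻¹))
  have hb2' : L/2*α^2*((n:ℝ)⁻¹^2 * (m:ℝ)⁻¹)
        * (2*L^2*(m:ℝ)*consSq u + 2*L^2*(m:ℝ)*(n:ℝ)*tAux ub v)
      = α^2*L^3*(n:ℝ)⁻¹^2*consSq u + α^2*L^3/(n:ℝ)*tAux ub v := by
    field_simp
  have hb3 := mul_le_mul_of_nonneg_left hWW (by linarith : (0:ℝ) ≤ α/2)
  have hb4c : α^2*L^3*((n:ℝ)⁻¹^2) ≤ 1/2*(α*L^2*(n:ℝ)⁻¹) := by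
    have h10 := mul_le_mul_of_nonneg_right hαLν
      (by positivity : (0:ℝ) ≤ α*L^2*(n:ℝ)⁻¹)
    calc α^2*L^3*((n:ℝ)⁻¹^2) = α*L*(n:ℝ)⁻¹*(α*L^2*(n:ℝ)⁻¹) := by ring
      _ ≤ 1/2*(α*L^2*(n:ℝ)⁻¹) := h10
  have hb4 := mul_le_mul_of_nonneg_right hb4c hC0
  have hdiv : α*L^2/(n:ℝ) = α*L^2*(n:ℝ)⁻¹ := by ring
  have hWW0 : (0:ℝ) ≤ ‖w - d‖^2 := by positivity
  have hwda : α * ⟪w, d⟫ = α*(‖w‖^2 + ‖d‖^2 - ‖w - d‖^2)/2 := by rw [hwd]; ring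
  have hb2c := hb2.trans_eq hb2'
  ring_nf at hb1 hb2c hb3 hb4 hwda ⊢
  linarith [hb1, hb2c, hb3, hb4, hwda, hC0, hT0, hWW0, hα0.le]

end DetMain

section Filt

variable {Ω : Type} [m0 : MeasurableSpace Ω] {n m : ℕ}

lemma gtFilt_le (τ s : Fin n → ℕ → Ω → Fin m) (hτ : ∀ i k, Measurable (τ i k))
    (hs : ∀ i k, Measurable (s i k)) (k : ℕ) : gtFilt τ s k ≤ m0 := by
  refine iSup_le fun i => iSup_le fun t => iSup_le fun _ => sup_le ?_ ?_
  · exact measurable_iff_comap_le.mp (hτ i t)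
  · exact measurable_iff_comap_le.mp (hs i t)

lemma comap_tau_le (τ s : Fin n → ℕ → Ω → Fin m) {t k : ℕ} (ht : t < k) (i : Fin n) :
    MeasurableSpace.comap (τ i t) ⊤ ≤ gtFilt τ s k :=
  le_trans le_sup_left
    (le_iSup_of_le i (le_iSup_of_le t (le_iSup_of_le ht le_rfl)))

lemma comap_s_le (τ s : Fin n → ℕ → Ω → Fin m) {t k : ℕ} (ht : t < k) (i : Fin n) :
    MeasurableSpace.comap (s i t) ⊤ ≤ gtFilt τ s k :=
  le_trans le_sup_right
    (le_iSup_of_le i (le_iSup_of_le t (le_iSup_of_le ht le_rfl)))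

lemma meas_tau_filt (τ s : Fin n → ℕ → Ω → Fin m) {t k : ℕ} (ht : t < k) (i : Fin n) :
    Measurable[gtFilt τ s k] (τ i t) :=
  measurable_iff_comap_le.mpr (comap_tau_le τ s ht i)

lemma meas_s_filt (τ s : Fin n → ℕ → Ω → Fin m) {t k : ℕ} (ht : t < k) (i : Fin n) :
    Measurable[gtFilt τ s k] (s i t) :=
  measurable_iff_comap_le.mpr (comap_s_le τ s ht i)

lemma gtFilt_mono (τ s : Fin n → ℕ → Ω → Fin m) {k k' : ℕ} (h : k ≤ k') :
    gtFilt τ s k ≤ gtFilt τ s k' :=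
  iSup_mono fun i => iSup_mono fun t => iSup_le fun ht =>
    le_iSup_of_le (lt_of_lt_of_le ht h) le_rfl

end Filt

/-- GT-SAGA: descent inequality for the global function at the averaged iterate. -/
theorem gtsaga_descent_inequality
    {Ω : Type} [MeasurableSpace Ω] (P : Measure Ω) [IsProbabilityMeasure P]
    {n m p : ℕ} (hn : 1 ≤ n) (hm : 1 ≤ m)
    (L : ℝ) (hL : 0 < L)
    (f : Fin n → Fin m → EuclideanSpace ℝ (Fin p) → ℝ)
    (hdiff : ∀ i j, Differentiable ℝ (f i j))
    (hlip : ∀ i j, LipschitzWith L.toNNReal (gradient (f i j)))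
    (hFbdd : BddBelow (Set.range (fglob f)))
    (w : Matrix (Fin n) (Fin n) ℝ)
    (hrow : ∀ i, ∑ r, w i r = 1) (hcol : ∀ r, ∑ i, w i r = 1)
    (lam : ℝ) (hlam : lam = secondSV w) (hlam0 : 0 ≤ lam) (hlam1 : lam < 1)
    (τ s : Fin n → ℕ → Ω → Fin m)
    (hτmeas : ∀ i k, Measurable (τ i k)) (hsmeas : ∀ i k, Measurable (s i k))
    (hτunif : ∀ i k j, P {ω | τ i k ω = j} = (m : ℝ≥0∞)⁻¹)
    (hsunif : ∀ i k j, P {ω | s i k ω = j} = (m : ℝ≥0∞)⁻¹)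
    (hindep : iIndepFun
      (fun (q : Fin n × ℕ × Bool) ω => if q.2.2 then τ q.1 q.2.1 ω else s q.1 q.2.1 ω) P)
    (α : ℝ) (hα0 : 0 < α)
    (x y g : ℕ → Fin n → Ω → EuclideanSpace ℝ (Fin p))
    (z : ℕ → Fin n → Fin m → Ω → EuclideanSpace ℝ (Fin p))
    (x0 : EuclideanSpace ℝ (Fin p))
    (hx0 : ∀ i ω, x 0 i ω = x0)
    (hz0 : ∀ i j ω, z 0 i j ω = x0)
    (hy0 : ∀ i ω, y 0 i ω = 0)
    (hgdef : ∀ k i ω, g k i ω =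
      gradient (f i (τ i k ω)) (x k i ω) - gradient (f i (τ i k ω)) (z k i (τ i k ω) ω)
        + (m : ℝ)⁻¹ • ∑ j, gradient (f i j) (z k i j ω))
    (hydef : ∀ k i ω, y (k + 1) i ω =
      ∑ r, w i r • (y k r ω + g k r ω - (if k = 0 then 0 else g (k - 1) r ω)))
    (hxdef : ∀ k i ω, x (k + 1) i ω = ∑ r, w i r • (x k r ω - α • y (k + 1) r ω))
    (hzdef : ∀ k i j ω, z (k + 1) i j ω = if j = s i k ω then x k i ω else z k i j ω)
    (hxL2 : ∀ k i, MemLp (x k i) 2 P)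
    (hyL2 : ∀ k i, MemLp (y k i) 2 P)
    (hgL2 : ∀ k i, MemLp (g k i) 2 P)
    (hzL2 : ∀ k i j, MemLp (z k i j) 2 P)
    (hα2 : α ≤ 1 / (2 * L)) (k : ℕ) :
    ∀ᵐ ω ∂P,
      (P[fun ω' => fglob f (blockAvg (fun i => x (k + 1) i ω')) | gtFilt τ s k]) ω
        ≤ fglob f (blockAvg (fun i => x k i ω))
          - α / 2 * ‖gradient (fglob f) (blockAvg (fun i => x k i ω))‖ ^ 2
          - α / 4 * ‖gradfbar f (fun i => x k i ω)‖ ^ 2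
          + α * L ^ 2 / n * consSq (fun i => x k i ω)
          + α ^ 2 * L ^ 3 / n * tAux (blockAvg (fun i => x k i ω)) (fun i j => z k i j ω) := by
  classical
  have hm0 : (0:ℝ) < m := by exact_mod_cast hm
  have hn0 : (0:ℝ) < n := by exact_mod_cast hn
  have hle : gtFilt τ s k ≤ ‹MeasurableSpace Ω› := gtFilt_le τ s hτmeas hsmeas k
  haveI hσ : SigmaFinite (P.trim hle) := by infer_instance
  -- ## Strong measurability of the iterates w.r.t. the filtration
  have hcompτ : ∀ (K : ℕ) (i : Fin n) (g' : Fin m → Ω → EuclideanSpace ℝ (Fin p)),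
      (∀ j, StronglyMeasurable[gtFilt τ s (K+1)] (g' j)) →
      StronglyMeasurable[gtFilt τ s (K+1)] (fun ω => g' (τ i K ω) ω) := by
    intro K i g' hg'
    have hdecomp : (fun ω => g' (τ i K ω) ω)
        = fun ω => ∑ j, if τ i K ω = j then g' j ω else 0 := by
      funext ω
      rw [Finset.sum_ite_eq Finset.univ (τ i K ω) (fun j => g' j ω)]
      simp
    rw [hdecomp]
    refine Finset.stronglyMeasurable_fun_sum _ fun j _ => ?_
    refine StronglyMeasurable.ite ?_ (hg' j) stronglyMeasurable_const
    exact meas_tau_filt τ s (Nat.lt_succ_self K) i (measurableSet_singleton j)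
  have hgradSM : ∀ (i : Fin n) (j : Fin m) {mΩ : MeasurableSpace Ω} (V : Ω → EuclideanSpace ℝ (Fin p)),
      StronglyMeasurable[mΩ] V →
      StronglyMeasurable[mΩ] (fun ω => gradient (f i j) (V ω)) := by
    intro i j mΩ V hV
    exact (hlip i j).continuous.comp_stronglyMeasurable hV
  have measxyz : ∀ K, (∀ i, StronglyMeasurable[gtFilt τ s K] (x K i))
      ∧ (∀ i, StronglyMeasurable[gtFilt τ s K] (y K i))
      ∧ (∀ i j, StronglyMeasurable[gtFilt τ s K] (z K i j)) := by
    intro K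
    induction K using Nat.strong_induction_on with
    | _ K ih =>
      match K with
      | 0 =>
        refine ⟨fun i => ?_, fun i => ?_, fun i j => ?_⟩
        · have e : x 0 i = fun _ => x0 := funext fun ω => hx0 i ω
          rw [e]; exact stronglyMeasurable_const
        · have e : y 0 i = fun _ => 0 := funext fun ω => hy0 i ω
          rw [e]; exact stronglyMeasurable_const
        · have e : z 0 i j = fun _ => x0 := funext fun ω => hz0 i j ω
          rw [e]; exact stronglyMeasurable_const
      | (K + 1) =>
        obtain ⟨ihx, ihy, ihz⟩ := ih K (Nat.lt_succ_self K)
        have hgSM : ∀ (K' : ℕ), (∀ i, StronglyMeasurable[gtFilt τ s K'] (x K' i)) →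
            (∀ i j, StronglyMeasurable[gtFilt τ s K'] (z K' i j)) →
            ∀ i, StronglyMeasurable[gtFilt τ s (K'+1)] (g K' i) := by
          intro K' hx' hz' i
          have e : g K' i = fun ω =>
              (fun ω' => gradient (f i (τ i K' ω')) (x K' i ω')) ω
              - (fun ω' => gradient (f i (τ i K' ω')) (z K' i (τ i K' ω') ω')) ω
              + ((m:ℝ)⁻¹ • ∑ j, gradient (f i j) (z K' i j ω)) := by
            funext ω
            exact hgdef K' i ω
          rw [e]
          have hmono := gtFilt_mono τ s (Nat.le_succ K')
          refine StronglyMeasurable.add (StronglyMeasurable.sub ?_ ?_) ?_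
          · exact hcompτ K' i _ fun j => hgradSM i j _ ((hx' i).mono hmono)
          · exact hcompτ K' i _ fun j => hgradSM i j _ ((hz' i j).mono hmono)
          · refine StronglyMeasurable.fun_const_smul ?_ _
            refine Finset.stronglyMeasurable_fun_sum _ fun j _ => ?_
            exact hgradSM i j _ ((hz' i j).mono hmono)
        have hgK : ∀ i, StronglyMeasurable[gtFilt τ s (K+1)] (g K i) := hgSM K ihx ihz
        have hyK1 : ∀ i, StronglyMeasurable[gtFilt τ s (K+1)] (y (K+1) i) := by
          intro i
          have e : y (K+1) i = fun ω => ∑ r, w i r •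
              (y K r ω + g K r ω - (if K = 0 then 0 else g (K-1) r ω)) :=
            funext fun ω => hydef K i ω
          rw [e]
          have hmono := gtFilt_mono τ s (Nat.le_succ K)
          refine Finset.stronglyMeasurable_fun_sum _ fun r _ => ?_
          refine StronglyMeasurable.fun_const_smul ?_ _
          refine StronglyMeasurable.sub (StronglyMeasurable.add ((ihy r).mono hmono) (hgK r)) ?_
          rcases Nat.eq_zero_or_pos K with hK | hK
          · subst hK
            simp only [if_pos rfl]
            exact stronglyMeasurable_const
          · have hKne : K ≠ 0 := Nat.pos_iff_ne_zero.mp hK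
            simp only [if_neg hKne]
            obtain ⟨ihx', ihy', ihz'⟩ := ih (K-1) (by omega)
            have := hgSM (K-1) ihx' ihz' r
            have heq : K - 1 + 1 = K := by omega
            rw [heq] at this
            exact this.mono hmono
        refine ⟨fun i => ?_, hyK1, fun i j => ?_⟩
        · have e : x (K+1) i = fun ω => ∑ r, w i r • (x K r ω - α • y (K+1) r ω) :=
            funext fun ω => hxdef K i ω
          rw [e]
          have hmono := gtFilt_mono τ s (Nat.le_succ K)
          refine Finset.stronglyMeasurable_fun_sum _ fun r _ => ?_
          refine StronglyMeasurable.fun_const_smul ?_ _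
          exact StronglyMeasurable.sub ((ihx r).mono hmono)
            (StronglyMeasurable.fun_const_smul (hyK1 r) _)
        · have e : z (K+1) i j = fun ω => if j = s i K ω then x K i ω else z K i j ω :=
            funext fun ω => hzdef K i j ω
          rw [e]
          have hmono := gtFilt_mono τ s (Nat.le_succ K)
          refine StronglyMeasurable.ite ?_ ((ihx i).mono hmono) ((ihz i j).mono hmono)
          have : {ω | j = s i K ω} = s i K ⁻¹' {x' : Fin m | j = x'} := rfl
          rw [this]
          exact meas_s_filt τ s (Nat.lt_succ_self K) i
            (by trivial : MeasurableSet[⊤] {x' : Fin m | j = x'})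
  obtain ⟨hxSM, hySM, hzSM⟩ := measxyz k
  -- ## The averaged iterate recursion
  have hswap : ∀ (ω : Ω) (h' : Fin n → EuclideanSpace ℝ (Fin p)),
      ∑ i, ∑ r, w i r • h' r = ∑ r, h' r := by
    intro ω h'
    rw [Finset.sum_comm]
    refine Finset.sum_congr rfl fun r _ => ?_
    rw [← Finset.sum_smul, hcol r, one_smul]
  have hybar : ∀ K (ω : Ω), ∑ i, y (K+1) i ω = ∑ i, g K i ω := by
    intro K
    induction K with
    | zero =>
      intro ω
      calc ∑ i, y 1 i ω = ∑ i, ∑ r, w i r • (y 0 r ω + g 0 r ω - 0) := by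
            refine Finset.sum_congr rfl fun i _ => ?_
            rw [hydef 0 i ω]
            simp
        _ = ∑ r, (y 0 r ω + g 0 r ω - 0) := hswap ω _
        _ = ∑ r, g 0 r ω := by
            refine Finset.sum_congr rfl fun r _ => ?_
            rw [hy0 r ω]
            abel
    | succ K ihK =>
      intro ω
      calc ∑ i, y (K+2) i ω
          = ∑ i, ∑ r, w i r • (y (K+1) r ω + g (K+1) r ω - g K r ω) := by
            refine Finset.sum_congr rfl fun i _ => ?_
            rw [hydef (K+1) i ω]
            simp
        _ = ∑ r, (y (K+1) r ω + g (K+1) r ω - g K r ω) := hswap ω _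
        _ = (∑ r, y (K+1) r ω) + (∑ r, g (K+1) r ω) - ∑ r, g K r ω := by
            rw [Finset.sum_sub_distrib, Finset.sum_add_distrib]
        _ = ∑ i, g (K+1) i ω := by
            rw [ihK ω]
            abel
  have hxbar : ∀ ω : Ω, blockAvg (fun i => x (k+1) i ω)
      = blockAvg (fun i => x k i ω) - α • ((n:ℝ)⁻¹ • ∑ i, g k i ω) := by
    intro ω
    unfold blockAvg
    have e1 : ∑ i, x (k+1) i ω = ∑ r, (x k r ω - α • y (k+1) r ω) := by
      calc ∑ i, x (k+1) i ω = ∑ i, ∑ r, w i r • (x k r ω - α • y (k+1) r ω) :=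
            Finset.sum_congr rfl fun i _ => hxdef k i ω
        _ = ∑ r, (x k r ω - α • y (k+1) r ω) := hswap ω _
    rw [e1, Finset.sum_sub_distrib, ← Finset.smul_sum, hybar k ω, smul_sub]
    rw [smul_comm ((n:ℝ)⁻¹) α]
  -- ## Definitions for the decomposition
  set Gd : (Fin n → Fin m) → Ω → EuclideanSpace ℝ (Fin p) := fun t ω =>
    (n:ℝ)⁻¹ • ∑ i, (gradient (f i (t i)) (x k i ω) - gradient (f i (t i)) (z k i (t i) ω)
      + (m:ℝ)⁻¹ • ∑ j, gradient (f i j) (z k i j ω)) with hGddef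
  set hfun : (Fin n → Fin m) → Ω → ℝ := fun t ω =>
    fglob f (blockAvg (fun i => x k i ω) - α • Gd t ω) with hhdef
  set A : (Fin n → Fin m) → Set Ω := fun t => ⋂ i, τ i k ⁻¹' {t i} with hAdef
  set χ : (Fin n → Fin m) → Ω → ℝ := fun t => (A t).indicator (fun _ => (1:ℝ)) with hχdef
  have hAmeas : ∀ t, MeasurableSet (A t) := fun t =>
    MeasurableSet.iInter fun i => (hτmeas i k) (measurableSet_singleton (t i))
  -- ## Pointwise decomposition of the integrand
  have hdecomp : (fun ω => fglob f (blockAvg (fun i => x (k+1) i ω)))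
      = fun ω => ∑ t : Fin n → Fin m, χ t ω * hfun t ω := by
    funext ω
    have hto : ∀ t : Fin n → Fin m, χ t ω * hfun t ω
        = if t = (fun i => τ i k ω) then hfun t ω else 0 := by
      intro t
      by_cases hmem : ω ∈ A t
      · have ht : t = fun i => τ i k ω := by
          funext i
          have := Set.mem_iInter.mp hmem i
          simpa using this.symm
        rw [if_pos ht, hχdef]
        simp [Set.indicator_of_mem hmem]
      · have ht : ¬ (t = fun i => τ i k ω) := by
          intro hc
          exact hmem (Set.mem_iInter.mpr fun i => by simp [hc])
        rw [if_neg ht, hχdef]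
        simp [Set.indicator_of_notMem hmem]
    rw [Finset.sum_congr rfl fun t _ => hto t,
      Finset.sum_ite_eq' Finset.univ (fun i => τ i k ω) (fun t => hfun t ω)]
    simp only [Finset.mem_univ, if_true]
    rw [hhdef]
    simp only []
    rw [hxbar ω]
    have egd : (n:ℝ)⁻¹ • ∑ i, g k i ω = Gd (fun i => τ i k ω) ω := by
      rw [hGddef]
      exact congrArg (fun zz => (n:ℝ)⁻¹ • zz) (Finset.sum_congr rfl fun i _ => hgdef k i ω)
    rw [egd]
  -- ## Square integrability and integrability
  have hgradL2 : ∀ (i : Fin n) (j : Fin m) (V : Ω → EuclideanSpace ℝ (Fin p)),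
      MemLp V 2 P → MemLp (fun ω => gradient (f i j) (V ω)) 2 P := by
    intro i j V hV
    have hsplit : (fun ω => gradient (f i j) (V ω))
        = (fun ω => (gradient (f i j) (V ω) - gradient (f i j) 0) + gradient (f i j) 0) := by
      funext ω
      abel
    rw [hsplit]
    refine MemLp.add ?_ (memLp_const _)
    have hlip' : LipschitzWith L.toNNReal (fun a => gradient (f i j) a - gradient (f i j) 0) := by
      refine LipschitzWith.of_dist_le_mul fun a b => ?_
      rw [dist_sub_right]
      exact (hlip i j).dist_le_mul a b
    exact hlip'.comp_memLp (by simp) hV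
  have hWL2 : ∀ t : Fin n → Fin m,
      MemLp (fun ω => blockAvg (fun i => x k i ω) - α • Gd t ω) 2 P := by
    intro t
    refine MemLp.sub ?_ ?_
    · have : (fun ω => blockAvg (fun i => x k i ω))
          = fun ω => (n:ℝ)⁻¹ • ∑ i, x k i ω := rfl
      rw [this]
      have h1 : MemLp (fun ω => ∑ i, x k i ω) 2 P :=
        memLp_finsetSum _ fun i _ => hxL2 k i
      exact h1.const_smul ((n:ℝ)⁻¹)
    · refine MemLp.const_smul (f := fun ω => Gd t ω) ?_ α
      rw [hGddef]
      simp only []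
      refine MemLp.const_smul (f := fun ω => ∑ i, (gradient (f i (t i)) (x k i ω)
        - gradient (f i (t i)) (z k i (t i) ω) + (m:ℝ)⁻¹ • ∑ j, gradient (f i j) (z k i j ω))) ?_ ((n:ℝ)⁻¹)
      refine memLp_finsetSum _ fun i _ => ?_
      refine MemLp.add (MemLp.sub ?_ ?_) ?_
      · exact hgradL2 i (t i) _ (hxL2 k i)
      · exact hgradL2 i (t i) _ (hzL2 k i (t i))
      · exact MemLp.const_smul (f := fun ω => ∑ j, gradient (f i j) (z k i j ω))
          (memLp_finsetSum _ fun j _ => hgradL2 i j _ (hzL2 k i j)) ((m:ℝ)⁻¹)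
  obtain ⟨B0, hB0⟩ := hFbdd
  have hB0' : ∀ a : EuclideanSpace ℝ (Fin p), B0 ≤ fglob f a := fun a =>
    hB0 (Set.mem_range_self a)
  have hupper : ∀ a : EuclideanSpace ℝ (Fin p),
      fglob f a ≤ fglob f 0 + ‖gradient (fglob f) 0‖*‖a‖ + L/2*‖a‖^2 := by
    intro a
    have hdl := descent_lemma (fglob f) (diff_fglob f hdiff) hL.le
      (lip_grad_fglob f hn hm hdiff hlip) 0 a
    have h2 : ⟪gradient (fglob f) 0, a - 0⟫ ≤ ‖gradient (fglob f) 0‖*‖a‖ := by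
      refine (real_inner_le_norm _ _).trans ?_
      simp
    have h3 : ‖a - (0: EuclideanSpace ℝ (Fin p))‖ = ‖a‖ := by simp
    rw [h3] at hdl
    linarith
  have habs : ∀ a : EuclideanSpace ℝ (Fin p),
      |fglob f a| ≤ (|fglob f 0| + |B0|) + ‖gradient (fglob f) 0‖*‖a‖ + L/2*‖a‖^2 := by
    intro a
    have h1 := hupper a
    have h2 := hB0' a
    have h4 : (0:ℝ) ≤ ‖gradient (fglob f) 0‖*‖a‖ := by positivity
    have h5 : (0:ℝ) ≤ L/2*‖a‖^2 := by positivity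
    rw [abs_le]
    constructor
    · have h6 := neg_abs_le B0
      have h7 := abs_nonneg (fglob f 0)
      linarith
    · have h6 := le_abs_self (fglob f 0)
      have h7 := abs_nonneg B0
      linarith
  have hInth : ∀ t, Integrable (hfun t) P := by
    intro t
    set W : Ω → EuclideanSpace ℝ (Fin p) :=
      fun ω => blockAvg (fun i => x k i ω) - α • Gd t ω with hWdef
    have hWmem := hWL2 t
    have hnormW : MemLp (fun ω => ‖W ω‖) 2 P := hWmem.norm
    have hint1 : Integrable (fun ω => ‖W ω‖) P := hnormW.integrable one_le_two
    have hint2 : Integrable (fun ω => ‖W ω‖^2) P := hnormW.integrable_sq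
    have hgint : Integrable
        (fun ω => (|fglob f 0| + |B0|) + ‖gradient (fglob f) 0‖*‖W ω‖ + L/2*‖W ω‖^2) P :=
      ((integrable_const _).add (hint1.const_mul _)).add (hint2.const_mul _)
    refine Integrable.mono' hgint ?_ ?_
    · exact (diff_fglob f hdiff).continuous.comp_aestronglyMeasurable
        hWmem.aestronglyMeasurable
    · refine Filter.Eventually.of_forall fun ω => ?_
      have := habs (W ω)
      simpa [Real.norm_eq_abs] using this
  have hIntχh : ∀ t, Integrable (fun ω => χ t ω * hfun t ω) P := by
    intro t
    refine Integrable.bdd_mul (c := 1) (hInth t) ?_ (Filter.Eventually.of_forall fun ω => ?_)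
    · exact (stronglyMeasurable_const.indicator (hAmeas t)).aestronglyMeasurable
    · rw [hχdef]
      simp only [Set.indicator_apply]
      split <;> simp
  -- ## Independence
  have hτle : (⨆ i, MeasurableSpace.comap (τ i k) ⊤) ≤ ‹MeasurableSpace Ω› :=
    iSup_le fun i => measurable_iff_comap_le.mp (hτmeas i k)
  have hcomap_eq : ∀ (i : Fin n) (K : ℕ), MeasurableSpace.comap
      (fun ω => if (true : Bool) then τ i K ω else s i K ω) (inferInstance) =
      MeasurableSpace.comap (τ i K) ⊤ := by
    intro i K
    rfl
  have hcomap_eq' : ∀ (i : Fin n) (K : ℕ), MeasurableSpace.comap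
      (fun ω => if (false : Bool) then τ i K ω else s i K ω) (inferInstance) =
      MeasurableSpace.comap (s i K) ⊤ := by
    intro i K
    rfl
  have hindepF : Indep (⨆ i, MeasurableSpace.comap (τ i k) ⊤) (gtFilt τ s k) P := by
    have h_le : ∀ q : Fin n × ℕ × Bool, MeasurableSpace.comap
        (fun ω => if q.2.2 then τ q.1 q.2.1 ω else s q.1 q.2.1 ω)
        (inferInstance : MeasurableSpace (Fin m)) ≤ ‹MeasurableSpace Ω› := by
      rintro ⟨i, K, b⟩
      cases b
      · rw [hcomap_eq' i K]
        exact measurable_iff_comap_le.mp (hsmeas i K)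
      · rw [hcomap_eq i K]
        exact measurable_iff_comap_le.mp (hτmeas i K)
    have hcompl := indep_biSup_compl h_le hindep.iIndep
      {q : Fin n × ℕ × Bool | q.2.1 = k ∧ q.2.2 = true}
    refine indep_of_indep_of_le_right (indep_of_indep_of_le_left hcompl ?_) ?_
    · refine iSup_le fun i => ?_
      refine le_iSup₂_of_le (⟨i, k, true⟩ : Fin n × ℕ × Bool) ⟨rfl, rfl⟩ ?_
      rw [hcomap_eq i k]
    · refine iSup_le fun i => iSup_le fun t => iSup_le fun ht => sup_le ?_ ?_
      · refine le_iSup₂_of_le (⟨i, t, true⟩ : Fin n × ℕ × Bool)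
          (by simp only [Set.mem_compl_iff, Set.mem_setOf_eq, not_and]; intro hc; omega) ?_
        rw [hcomap_eq i t]
      · refine le_iSup₂_of_le (⟨i, t, false⟩ : Fin n × ℕ × Bool)
          (by simp) ?_
        rw [hcomap_eq' i t]
  have hPA : ∀ t : Fin n → Fin m, P (A t) = ((m:ℝ≥0∞))⁻¹ ^ n := by
    intro t
    set sQ : Fin n × ℕ × Bool → Set Ω := fun q =>
      (fun ω => if q.2.2 then τ q.1 q.2.1 ω else s q.1 q.2.1 ω) ⁻¹' {t q.1} with hsQ
    have hinj : ∀ a ∈ Finset.univ, ∀ b ∈ Finset.univ,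
        (fun i : Fin n => ((i, k, true) : Fin n × ℕ × Bool)) a
          = (fun i : Fin n => ((i, k, true) : Fin n × ℕ × Bool)) b → a = b := by
      intro a _ b _ hab
      simpa using hab
    have hmeas := hindep.meas_biInter
      (S := Finset.univ.image (fun i : Fin n => ((i, k, true) : Fin n × ℕ × Bool)))
      (s := sQ) (fun q _ => ⟨{t q.1}, trivial, rfl⟩)
    have hset : ⋂ q ∈ Finset.univ.image (fun i : Fin n => ((i, k, true) : Fin n × ℕ × Bool)),
        sQ q = A t := by
      rw [hAdef]
      ext ω
      simp [hsQ]
    rw [hset] at hmeas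
    rw [hmeas, Finset.prod_image hinj]
    have hone : ∀ i : Fin n, P (sQ (i, k, true)) = (m:ℝ≥0∞)⁻¹ := by
      intro i
      have e : sQ (i, k, true) = {ω | τ i k ω = t i} := by
        ext ω
        simp [hsQ]
      rw [e, hτunif i k (t i)]
    rw [Finset.prod_congr rfl (fun i _ => hone i), Finset.prod_const, Finset.card_univ,
      Fintype.card_fin]
  have hPAr : ∀ t : Fin n → Fin m, (P (A t)).toReal = ((m:ℝ)^n)⁻¹ := by
    intro t
    rw [hPA t]
    rw [ENNReal.toReal_pow, ENNReal.toReal_inv, ENNReal.toReal_natCast, inv_pow]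
  -- ## Strong measurability of hfun w.r.t. the filtration
  have hSMh : ∀ t, StronglyMeasurable[gtFilt τ s k] (hfun t) := by
    intro t
    rw [hhdef]
    refine (diff_fglob f hdiff).continuous.comp_stronglyMeasurable ?_
    refine StronglyMeasurable.sub ?_ ?_
    · have e : (fun ω => blockAvg (fun i => x k i ω))
          = fun ω => (n:ℝ)⁻¹ • ∑ i, x k i ω := rfl
      rw [e]
      exact (Finset.stronglyMeasurable_fun_sum _ fun i _ => hxSM i).fun_const_smul _
    · refine StronglyMeasurable.fun_const_smul ?_ _
      rw [hGddef]
      simp only []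
      refine StronglyMeasurable.fun_const_smul ?_ _
      refine Finset.stronglyMeasurable_fun_sum _ fun i _ => ?_
      refine StronglyMeasurable.add (StronglyMeasurable.sub ?_ ?_) ?_
      · exact hgradSM i (t i) _ (hxSM i)
      · exact hgradSM i (t i) _ (hzSM i (t i))
      · exact (Finset.stronglyMeasurable_fun_sum _ fun j _ =>
          hgradSM i j _ (hzSM i j)).fun_const_smul _
  have hχSM : ∀ t, StronglyMeasurable[⨆ i, MeasurableSpace.comap (τ i k) ⊤] (χ t) := by
    intro t
    refine stronglyMeasurable_const.indicator ?_
    refine MeasurableSet.iInter fun i => ?_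
    exact (le_iSup (fun i => MeasurableSpace.comap (τ i k) ⊤) i) _ ⟨{t i}, trivial, rfl⟩
  -- ## Conditional expectation computation
  have hχint : ∀ t, Integrable (χ t) P := fun t =>
    (integrable_const (1:ℝ)).indicator (hAmeas t)
  have hcond1 : ∀ t, P[fun ω => χ t ω * hfun t ω | gtFilt τ s k]
      =ᵐ[P] fun ω => hfun t ω * ((m:ℝ)^n)⁻¹ := by
    intro t
    have e0 : (fun ω => χ t ω * hfun t ω) = hfun t * χ t := by
      funext ω
      simp [mul_comm]
    have h1 := condExp_mul_of_stronglyMeasurable_left (μ := P) (m := gtFilt τ s k)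
      (hSMh t) (by rw [← e0]; exact hIntχh t) (hχint t)
    have h2 := condExp_indep_eq hτle hle (hχSM t) hindepF
    have h3 : ∫ ω, χ t ω ∂P = ((m:ℝ)^n)⁻¹ := by
      rw [hχdef]
      simp only []
      rw [show (A t).indicator (fun _ => (1:ℝ)) = (A t).indicator 1 from rfl]
      rw [integral_indicator_one (hAmeas t)]
      exact hPAr t
    rw [e0]
    refine h1.trans ?_
    have h4 : hfun t * P[χ t | gtFilt τ s k] =ᵐ[P] hfun t * fun _ => ((m:ℝ)^n)⁻¹ := by
      filter_upwards [h2] with ω hω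
      simp only [Pi.mul_apply, hω]
      rw [h3]
    exact h4
  have hcond : P[fun ω' => fglob f (blockAvg (fun i => x (k+1) i ω')) | gtFilt τ s k]
      =ᵐ[P] fun ω => ((m:ℝ)^n)⁻¹ * ∑ t : Fin n → Fin m, hfun t ω := by
    have e1 : (fun ω' => fglob f (blockAvg (fun i => x (k+1) i ω')))
        = ∑ t : Fin n → Fin m, (fun ω => χ t ω * hfun t ω) := by
      rw [hdecomp]
      funext ω
      rw [Finset.sum_apply]
    rw [e1]
    refine (condExp_finsetSum (fun t _ => hIntχh t) (gtFilt τ s k)).trans ?_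
    have hall : ∀ᵐ ω ∂P, ∀ t : Fin n → Fin m,
        (P[fun ω' => χ t ω' * hfun t ω' | gtFilt τ s k]) ω = hfun t ω * ((m:ℝ)^n)⁻¹ :=
      ae_all_iff.mpr fun t => hcond1 t
    filter_upwards [hall] with ω hω
    rw [Finset.sum_apply]
    rw [Finset.sum_congr rfl fun t _ => hω t, ← Finset.sum_mul]
    ring
  -- ## Conclusion via the deterministic lemma
  filter_upwards [hcond] with ω hω
  rw [hω]
  have hdet := det_main hn hm hL f hdiff hlip hα0 hα2
    (fun i => x k i ω) (fun i j => z k i j ω)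
  exact hdet

end
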